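/- Let L be a finite lattice, let T be a trinket-removal set of L, and let R be the induced lattice on L \ T. Then L is a modular lattice if and only if R is a modular lattice. -/
import Mathlib


/-- An element of a finite lattice is *doubly irreducible* if it has exactly one
upper cover and exactly one lower cover. -/
def DoublyIrreducible {α : Type*} [Lattice α] (x : α) : Prop :=
  (∃! u, x ⋖ u) ∧ (∃! l, l ⋖ x)

/-- A *decoration site* of a lattice is a pair `(a, b)` such that the set of upper
covers of `a` equals the set of lower covers of `b`, and `a` has at least two
upper covers. -/
def DecorationSite {α : Type*} [Lattice α] (a b : α) : Prop :=
  {x | a ⋖ x} = {x | x ⋖ b} ∧ 2 ≤ {x | a ⋖ x}.ncard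

/-- The doubly irreducible elements strictly between `a` and `b`. -/
def siteTrinkets {α : Type*} [Lattice α] (a b : α) : Set α :=
  {x | DoublyIrreducible x ∧ a < x ∧ x < b}

/-- A *trinket-removal set* of a lattice: for every decoration site `(a, b)` it
contains exactly `min d (k - 2)` doubly irreducible elements strictly between
`a` and `b` (where `d` is the number of doubly irreducible elements strictly
between `a` and `b`, and `k` is the number of upper covers of `a`), and it
contains no other elements. -/
def TrinketRemovalSet {α : Type*} [Lattice α] (T : Set α) : Prop :=
  (∀ a b : α, DecorationSite a b →
      (T ∩ siteTrinkets a b).ncard =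
        min (siteTrinkets a b).ncard ({x | a ⋖ x}.ncard - 2)) ∧
  ∀ t ∈ T, ∃ a b : α, DecorationSite a b ∧ t ∈ siteTrinkets a b

/-- A finite lattice is a *rack* if `min d (k - 2) = 0` for every decoration site. -/
def IsRack (α : Type*) [Lattice α] : Prop :=
  ∀ a b : α, DecorationSite a b →
    min (siteTrinkets a b).ncard ({x | a ⋖ x}.ncard - 2) = 0

/-- A *knot* of a finite lattice is an element distinct from top and bottom that
is comparable with every element. -/
def IsKnot {α : Type*} [Lattice α] (x : α) : Prop :=
  (∃ y, x < y) ∧ (∃ y, y < x) ∧ ∀ y, x ≤ y ∨ y ≤ x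

/-- Birkhoff's semimodularity condition: whenever distinct `x` and `y` both
cover a common element `a`, the join `x ⊔ y` covers both `x` and `y`. -/
def Semimodular (α : Type*) [Lattice α] : Prop :=
  ∀ a x y : α, x ≠ y → a ⋖ x → a ⋖ y → x ⋖ x ⊔ y ∧ y ⋖ x ⊔ y

/-- The modular law: for all `x ≤ z`, `x ⊔ (y ⊓ z) = (x ⊔ y) ⊓ z`. -/
def ModularLaw (α : Type*) [Lattice α] : Prop :=
  ∀ x y z : α, x ≤ z → x ⊔ (y ⊓ z) = (x ⊔ y) ⊓ z

section Aux
variable {α : Type*} [Lattice α] [Finite α]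

private lemma exists_covBy_le' {a w : α} (h : a < w) : ∃ c, a ⋖ c ∧ c ≤ w := by
  obtain ⟨m, ⟨ham, hmw⟩, hmin⟩ :=
    wellFounded_lt.has_min {v : α | a < v ∧ v ≤ w} ⟨w, h, le_rfl⟩
  exact ⟨m, ⟨ham, fun c hac hcm => hmin c ⟨hac, hcm.le.trans hmw⟩ hcm⟩, hmw⟩

private lemma exists_le_covBy' {w b : α} (h : w < b) : ∃ c, w ≤ c ∧ c ⋖ b := by
  obtain ⟨m, ⟨hwm, hmb⟩, hmax⟩ :=
    wellFounded_gt.has_min {v : α | w ≤ v ∧ v < b} ⟨w, le_rfl, h⟩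
  exact ⟨m, hwm, hmb, fun c hmc hcb => hmax c ⟨hwm.trans hmc.le, hcb⟩ hmc⟩

private lemma trinket_step {T W : Set α} (hT : TrinketRemovalSet T) (hWc : Tᶜ ⊆ W)
    (hsupW : ∀ ⦃x⦄, x ∈ W → ∀ ⦃y⦄, y ∈ W → x ⊔ y ∈ W)
    (hinfW : ∀ ⦃x⦄, x ∈ W → ∀ ⦃y⦄, y ∈ W → x ⊓ y ∈ W)
    (hlaw : ∀ ⦃x⦄, x ∈ W → ∀ ⦃y⦄, y ∈ W → ∀ ⦃z⦄, z ∈ W → x ≤ z →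
      x ⊔ (y ⊓ z) = (x ⊔ y) ⊓ z)
    {t : α} (ht : t ∉ W) :
    (∀ ⦃x⦄, x ∈ insert t W → ∀ ⦃y⦄, y ∈ insert t W → x ⊔ y ∈ insert t W) ∧
    (∀ ⦃x⦄, x ∈ insert t W → ∀ ⦃y⦄, y ∈ insert t W → x ⊓ y ∈ insert t W) ∧
    (∀ ⦃x⦄, x ∈ insert t W → ∀ ⦃y⦄, y ∈ insert t W → ∀ ⦃z⦄, z ∈ insert t W → x ≤ z →
      x ⊔ (y ⊓ z) = (x ⊔ y) ⊓ z) := by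
  have htT : t ∈ T := by
    by_contra h
    exact ht (hWc h)
  obtain ⟨a, b, ⟨hcov, hk⟩, hDI, hat, htb⟩ := hT.2 t htT
  -- transfer of covers
  have hcb : ∀ ⦃c⦄, a ⋖ c → c ⋖ b := fun c hc => (Set.ext_iff.mp hcov c).mp hc
  have hca : ∀ ⦃c⦄, c ⋖ b → a ⋖ c := fun c hc => (Set.ext_iff.mp hcov c).mpr hc
  have hmid : ∀ w, a < w → w < b → a ⋖ w ∧ w ⋖ b := by
    intro w h1 h2
    obtain ⟨c, hc, hcw⟩ := exists_covBy_le' h1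
    have hcb' : c ⋖ b := hcb hc
    rcases hcw.lt_or_eq with hlt | rfl
    · exact absurd h2 (hcb'.2 hlt)
    · exact ⟨hc, hcb'⟩
  have hab : a ⋖ t := (hmid t hat htb).1
  have htcb : t ⋖ b := (hmid t hat htb).2
  have hlow : ∀ ⦃w⦄, w < t → w ≤ a := by
    intro w hw
    obtain ⟨c, hwc, hct⟩ := exists_le_covBy' hw
    obtain ⟨l, -, hluniq⟩ := hDI.2
    have : c = a := (hluniq c hct).trans (hluniq a hab).symm
    exact this ▸ hwc
  have hhigh : ∀ ⦃w⦄, t < w → b ≤ w := by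
    intro w hw
    obtain ⟨c, hct, hcw⟩ := exists_covBy_le' hw
    obtain ⟨u, -, huniq⟩ := hDI.1
    have : c = b := (huniq c hct).trans (huniq b htcb).symm
    exact this ▸ hcw
  have hmeetI : ∀ ⦃w⦄, ¬ w ≤ t → ¬ t ≤ w → w ⊓ t = w ⊓ a := by
    intro w h1 h2
    apply le_antisymm
    · have hne : w ⊓ t ≠ t := fun h => h2 (h ▸ inf_le_left)
      exact le_inf inf_le_left (hlow (inf_le_right.lt_of_ne hne))
    · exact le_inf inf_le_left (inf_le_right.trans hab.lt.le)
  have hjoinI : ∀ ⦃w⦄, ¬ w ≤ t → ¬ t ≤ w → w ⊔ t = w ⊔ b := by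
    intro w h1 h2
    apply le_antisymm
    · exact sup_le le_sup_left (htcb.lt.le.trans le_sup_right)
    · have hne : t ≠ w ⊔ t := fun h => h1 (le_sup_left.trans h.symm.le)
      exact sup_le le_sup_left (hhigh (le_sup_right.lt_of_ne hne))
  have haab : a ≤ b := hat.le.trans htb.le
  -- a and b are not doubly irreducible, hence not in T
  obtain ⟨c1, c2, hc1, hc2, hc12⟩ :=
    (Set.one_lt_ncard_iff (Set.toFinite _)).mp (lt_of_lt_of_le one_lt_two hk)
  have hc1' : a ⋖ c1 := hc1
  have hc2' : a ⋖ c2 := hc2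
  have haT : a ∉ T := by
    intro h
    obtain ⟨a', b', -, hDIa, -⟩ := hT.2 a h
    obtain ⟨u, -, huniq⟩ := hDIa.1
    exact hc12 ((huniq c1 hc1').trans (huniq c2 hc2').symm)
  have hbT : b ∉ T := by
    intro h
    obtain ⟨a', b', -, hDIb, -⟩ := hT.2 b h
    obtain ⟨l, -, hluniq⟩ := hDIb.2
    exact hc12 ((hluniq c1 (hcb hc1')).trans (hluniq c2 (hcb hc2')).symm)
  have haW : a ∈ W := hWc haT
  have hbW : b ∈ W := hWc hbT
  refine ⟨?_, ?_, ?_⟩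
  · -- sup closure
    rintro x hx' y hy'
    rcases hx' with hx | hx
    · subst x
      rcases hy' with hy | hy
      · subst y; simp
      · by_cases h1 : y ≤ t
        · rw [sup_comm, sup_eq_right.mpr h1]; exact Set.mem_insert _ _
        · by_cases h2 : t ≤ y
          · rw [sup_eq_right.mpr h2]; exact Set.mem_insert_of_mem _ hy
          · rw [sup_comm, hjoinI h1 h2]
            exact Set.mem_insert_of_mem _ (hsupW hy hbW)
    · rcases hy' with hy | hy
      · subst y
        by_cases h1 : x ≤ t
        · rw [sup_eq_right.mpr h1]; exact Set.mem_insert _ _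
        · by_cases h2 : t ≤ x
          · rw [sup_eq_left.mpr h2]; exact Set.mem_insert_of_mem _ hx
          · rw [hjoinI h1 h2]
            exact Set.mem_insert_of_mem _ (hsupW hx hbW)
      · exact Set.mem_insert_of_mem _ (hsupW hx hy)
  · -- inf closure
    rintro x hx' y hy'
    rcases hx' with hx | hx
    · subst x
      rcases hy' with hy | hy
      · subst y; simp
      · by_cases h1 : y ≤ t
        · rw [inf_comm, inf_eq_left.mpr h1]; exact Set.mem_insert_of_mem _ hy
        · by_cases h2 : t ≤ y
          · rw [inf_eq_left.mpr h2]; exact Set.mem_insert _ _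
          · rw [inf_comm, hmeetI h1 h2]
            exact Set.mem_insert_of_mem _ (hinfW hy haW)
    · rcases hy' with hy | hy
      · subst y
        by_cases h1 : x ≤ t
        · rw [inf_eq_left.mpr h1]; exact Set.mem_insert_of_mem _ hx
        · by_cases h2 : t ≤ x
          · rw [inf_eq_right.mpr h2]; exact Set.mem_insert _ _
          · rw [hmeetI h1 h2]
            exact Set.mem_insert_of_mem _ (hinfW hx haW)
      · exact Set.mem_insert_of_mem _ (hinfW hx hy)
  · -- modular law on insert t W
    rintro x hx' y hy' z hz' hxz
    rcases hx' with hx | hx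
    · subst x
      rcases hy' with hy | hy
      · subst y
        rcases hz' with hz | hz
        · subst z; simp
        · rw [inf_eq_left.mpr hxz, sup_idem, inf_eq_left.mpr hxz]
      · rcases hz' with hz | hz
        · subst z
          rw [sup_eq_left.mpr inf_le_right, inf_eq_right.mpr le_sup_left]
        · -- CASE X : x = t, y z ∈ W
          have hzt : t ≠ z := fun h => ht (h ▸ hz)
          have hbz : b ≤ z := hhigh (hxz.lt_of_ne hzt)
          by_cases h1 : t ≤ y
          · rw [sup_eq_right.mpr (le_inf h1 hxz), sup_eq_right.mpr h1]
          · by_cases h2 : y ≤ t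
            · rw [sup_eq_left.mpr (inf_le_left.trans h2), sup_eq_left.mpr h2,
                inf_eq_left.mpr hxz]
            · by_cases h3 : y ⊓ z ≤ a
              · exfalso
                have hyb : y ⊓ b ≤ a := (inf_le_inf_left y hbz).trans h3
                have hya : ¬ y ≤ a := fun h => h2 (h.trans hab.lt.le)
                have hlt : a < a ⊔ y :=
                  lt_of_le_of_ne le_sup_left (fun h => hya (le_sup_right.trans h.ge))
                obtain ⟨c, hac, hcxy⟩ := exists_covBy_le' hlt
                have hle : c ≤ a := by
                  have h6 : a ⊔ (y ⊓ b) = (a ⊔ y) ⊓ b := hlaw haW hy hbW haab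
                  have h7 : (a ⊔ y) ⊓ b = a := by
                    rw [← h6, sup_eq_left.mpr hyb]
                  exact h7 ▸ le_inf hcxy (hcb hac).lt.le
                exact absurd hle hac.lt.not_ge
              · have h4 : ¬ y ⊓ z ≤ t :=
                  fun h => h3 (hlow (h.lt_of_ne (fun he => h1 (he ▸ inf_le_left))))
                have h5 : ¬ t ≤ y ⊓ z := fun h => h1 (h.trans inf_le_left)
                rw [sup_comm t (y ⊓ z), hjoinI h4 h5, sup_comm (y ⊓ z) b,
                  hlaw hbW hy hz hbz, sup_comm t y, hjoinI h2 h1, sup_comm y b]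
    · rcases hy' with hy | hy
      · subst y
        rcases hz' with hz | hz
        · subst z
          rw [inf_idem, sup_eq_right.mpr hxz, inf_idem]
        · -- CASE Y : y = t, x z ∈ W
          by_cases h1 : t ≤ x
          · rw [sup_eq_left.mpr (inf_le_left.trans h1), sup_eq_left.mpr h1,
              inf_eq_left.mpr hxz]
          · by_cases h2 : x ≤ t
            · have hxt : x ≠ t := fun h => ht (h ▸ hx)
              have hxa : x ≤ a := hlow (h2.lt_of_ne hxt)
              by_cases h3 : t ≤ z
              · rw [inf_eq_left.mpr h3, sup_eq_right.mpr h2, inf_eq_left.mpr h3]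
              · by_cases h4 : z ≤ t
                · rw [inf_eq_right.mpr h4, sup_eq_right.mpr hxz, sup_eq_right.mpr h2,
                    inf_eq_right.mpr h4]
                · have h5 : t ⊓ z = a ⊓ z := by
                    rw [inf_comm, hmeetI h4 h3, inf_comm]
                  rw [h5, sup_eq_right.mpr (le_inf hxa hxz), sup_eq_right.mpr h2, h5]
            · by_cases h3 : t ≤ z
              · have hzt : t ≠ z := fun h => ht (h ▸ hz)
                have hbz : b ≤ z := hhigh (h3.lt_of_ne hzt)
                rw [inf_eq_left.mpr h3, hjoinI h2 h1,
                  inf_eq_left.mpr (sup_le hxz hbz)]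
              · by_cases h4 : z ≤ t
                · exact absurd (hxz.trans h4) h2
                · -- MAIN CASE : x, z both incomparable to t
                  have h5 : t ⊓ z = a ⊓ z := by
                    rw [inf_comm, hmeetI h4 h3, inf_comm]
                  rw [h5, hjoinI h2 h1]
                  -- goal : x ⊔ (a ⊓ z) = (x ⊔ b) ⊓ z
                  have huW : b ⊓ z ∈ W := hinfW hbW hz
                  have hub : b ⊓ z ≤ b := inf_le_left
                  have huz : b ⊓ z ≤ z := inf_le_right
                  have hnbz : ¬ b ≤ z := fun h => h3 (htcb.lt.le.trans h)
                  have key : b ⊓ z ≤ a ⊔ x := by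
                    by_cases hua : b ⊓ z ≤ a
                    · exact hua.trans le_sup_left
                    · by_cases hbax : b ≤ a ⊔ x
                      · exact hub.trans hbax
                      · have hub2 : b ⊓ z < b :=
                          hub.lt_of_ne (fun h => hnbz (h ▸ huz))
                        obtain ⟨c', huc', hc'b⟩ := exists_le_covBy' hub2
                        have hac' : a ⋖ c' := hca hc'b
                        have hcdef : a < a ⊔ (b ⊓ z) :=
                          lt_of_le_of_ne le_sup_left (fun h => hua (le_sup_right.trans h.ge))
                        have hcb2 : a ⊔ (b ⊓ z) < b :=
                          lt_of_le_of_lt (sup_le hac'.lt.le huc') hc'b.lt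
                        have hac : a ⋖ a ⊔ (b ⊓ z) := (hmid _ hcdef hcb2).1
                        have hxna : ¬ x ≤ a := fun h => h2 (h.trans hab.lt.le)
                        have hax : a < a ⊔ x :=
                          lt_of_le_of_ne le_sup_left (fun h => hxna (le_sup_right.trans h.ge))
                        obtain ⟨c'', hac'', hc''ax⟩ := exists_covBy_le' hax
                        have hvb : (a ⊔ x) ⊓ b < b :=
                          lt_of_le_of_ne inf_le_right (fun h => hbax (h ▸ inf_le_left))
                        have hva : a < (a ⊔ x) ⊓ b :=
                          lt_of_lt_of_le hac''.lt (le_inf hc''ax (hcb hac'').lt.le)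
                        have hxuz : x ⊔ (b ⊓ z) ≤ z := sup_le hxz huz
                        have hxub : (x ⊔ (b ⊓ z)) ⊓ b = b ⊓ z := by
                          apply le_antisymm
                          · exact le_inf inf_le_right (inf_le_left.trans hxuz)
                          · exact le_inf le_sup_right hub
                        have hkey : a ⊔ (b ⊓ z) = (a ⊔ (x ⊔ (b ⊓ z))) ⊓ b := by
                          have h8 := hlaw haW (hsupW hx huW) hbW haab
                          rw [hxub] at h8
                          exact h8
                        have hvc : (a ⊔ x) ⊓ b ≤ a ⊔ (b ⊓ z) := by
                          rw [hkey]
                          refine le_inf (inf_le_left.trans (sup_le le_sup_left ?_)) inf_le_right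
                          exact le_sup_left.trans le_sup_right
                        have hveq : (a ⊔ x) ⊓ b = a ⊔ (b ⊓ z) := by
                          rcases hvc.lt_or_eq with hlt | heq
                          · exact absurd hlt (hac.2 hva)
                          · exact heq
                        have h9 : a ⊔ (b ⊓ z) ≤ a ⊔ x := hveq ▸ inf_le_left
                        exact le_sup_right.trans h9
                  apply le_antisymm
                  · exact le_inf
                      (sup_le le_sup_left ((inf_le_left.trans haab).trans le_sup_right))
                      (sup_le hxz inf_le_right)
                  · have h6 : (x ⊔ b) ⊓ z = x ⊔ (b ⊓ z) := (hlaw hx hbW hz hxz).symm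
                    rw [h6]
                    refine sup_le le_sup_left ?_
                    have h7 : b ⊓ z ≤ (x ⊔ a) ⊓ z := le_inf (by rw [sup_comm]; exact key) huz
                    rw [← hlaw hx haW hz hxz] at h7
                    exact h7
      · rcases hz' with hz | hz
        · subst z
          -- CASE Z : z = t, x y ∈ W
          have hxt : x ≠ t := fun h => ht (h ▸ hx)
          have hxa : x ≤ a := hlow (hxz.lt_of_ne hxt)
          by_cases h1 : t ≤ y
          · rw [inf_eq_right.mpr h1, sup_eq_right.mpr hxz,
              inf_eq_right.mpr (h1.trans le_sup_right)]
          · by_cases h2 : y ≤ t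
            · rw [inf_eq_left.mpr h2, inf_eq_left.mpr (sup_le hxz h2)]
            · have hyt : y ⊓ t = y ⊓ a := hmeetI h2 h1
              by_cases h3 : t ≤ x ⊔ y
              · exfalso
                have hne : t ≠ x ⊔ y := fun h => h2 (le_sup_right.trans h.ge)
                have hlt : t < x ⊔ y := h3.lt_of_ne hne
                have hbxy : b ≤ a ⊔ y :=
                  (hhigh hlt).trans (sup_le (hxa.trans le_sup_left) le_sup_right)
                have h6 : a ⊔ (y ⊓ b) = (a ⊔ y) ⊓ b := hlaw haW hy hbW haab
                have h7 : a ⊔ (y ⊓ b) = b := by rw [h6, inf_eq_right.mpr hbxy]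
                have hyb : y ⊓ b < b :=
                  inf_le_right.lt_of_ne (fun h => h1 (htcb.lt.le.trans (h ▸ inf_le_left)))
                obtain ⟨c, hc1, hc2⟩ := exists_le_covBy' hyb
                have h8 : b ≤ c := h7 ▸ sup_le (hca hc2).lt.le hc1
                exact absurd h8 hc2.lt.not_ge
              · have h4 : ¬ x ⊔ y ≤ t := fun h => h2 (le_sup_right.trans h)
                rw [hyt, hmeetI h4 h3]
                exact hlaw hx hy haW hxa
        · -- all in W
          exact hlaw hx hy hz hxz
end Aux

/-- A finite lattice is modular iff the lattice obtained by removing a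
trinket-removal set is modular. -/
theorem stmt_13 {α : Type*} [Lattice α] [Finite α] [Nonempty α] (T : Set α)
    (hT : TrinketRemovalSet T) (S : Sublattice α) (hS : (S : Set α) = Tᶜ) :
    ModularLaw α ↔ ModularLaw ↥S := by
  constructor
  · intro h x y z hxz
    apply Subtype.ext
    simp only [Sublattice.coe_sup, Sublattice.coe_inf]
    exact h _ _ _ (Subtype.coe_le_coe.mpr hxz)
  · intro h
    have law0 : ∀ ⦃x⦄, x ∈ (Tᶜ : Set α) → ∀ ⦃y⦄, y ∈ (Tᶜ : Set α) →
        ∀ ⦃z⦄, z ∈ (Tᶜ : Set α) → x ≤ z → x ⊔ (y ⊓ z) = (x ⊔ y) ⊓ z := by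
      intro x hx y hy z hz hxz
      rw [← hS] at hx hy hz
      exact congrArg Subtype.val (h ⟨x, hx⟩ ⟨y, hy⟩ ⟨z, hz⟩ hxz)
    have hsup0 : ∀ ⦃x⦄, x ∈ (Tᶜ : Set α) → ∀ ⦃y⦄, y ∈ (Tᶜ : Set α) → x ⊔ y ∈ (Tᶜ : Set α) := by
      intro x hx y hy
      rw [← hS] at hx hy ⊢
      exact S.supClosed hx hy
    have hinf0 : ∀ ⦃x⦄, x ∈ (Tᶜ : Set α) → ∀ ⦃y⦄, y ∈ (Tᶜ : Set α) → x ⊓ y ∈ (Tᶜ : Set α) := by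
      intro x hx y hy
      rw [← hS] at hx hy ⊢
      exact S.infClosed hx hy
    have main : ∀ n : ℕ, ∀ W : Set α, Tᶜ ⊆ W →
        (∀ ⦃x⦄, x ∈ W → ∀ ⦃y⦄, y ∈ W → x ⊔ y ∈ W) →
        (∀ ⦃x⦄, x ∈ W → ∀ ⦃y⦄, y ∈ W → x ⊓ y ∈ W) →
        (∀ ⦃x⦄, x ∈ W → ∀ ⦃y⦄, y ∈ W → ∀ ⦃z⦄, z ∈ W → x ≤ z →
          x ⊔ (y ⊓ z) = (x ⊔ y) ⊓ z) →
        Wᶜ.ncard ≤ n → ModularLaw α := by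
      intro n
      induction n with
      | zero =>
        intro W hWc hsupW hinfW hlawW hcard x y z hxz
        have hW : W = Set.univ := by
          rw [← Set.compl_empty_iff]
          exact (Set.ncard_eq_zero (Set.toFinite _)).mp (Nat.le_zero.mp hcard)
        subst hW
        exact hlawW trivial trivial trivial hxz
      | succ n ih =>
        intro W hWc hsupW hinfW hlawW hcard
        by_cases hW : Wᶜ = ∅
        · have hW' : W = Set.univ := Set.compl_empty_iff.mp hW
          subst hW'
          exact fun x y z hxz => hlawW trivial trivial trivial hxz
        · obtain ⟨t, ht⟩ := Set.nonempty_iff_ne_empty.mpr hW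
          obtain ⟨s1, s2, s3⟩ := trinket_step hT hWc hsupW hinfW hlawW ht
          refine ih (insert t W) (hWc.trans (Set.subset_insert _ _)) s1 s2 s3 ?_
          have h1 : (insert t W)ᶜ ⊆ Wᶜ := Set.compl_subset_compl.mpr (Set.subset_insert _ _)
          have hne : (insert t W)ᶜ ≠ Wᶜ := by
            intro he
            exact (he.symm ▸ ht : t ∈ (insert t W)ᶜ) (Set.mem_insert _ _)
          have hlt : ((insert t W)ᶜ).ncard < (Wᶜ).ncard :=
            Set.ncard_lt_ncard ((Set.ssubset_iff_subset_ne).mpr ⟨h1, hne⟩) (Set.toFinite _)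
          omega
    exact main (Tᶜᶜ : Set α).ncard Tᶜ subset_rfl hsup0 hinf0 law0 le_rfl
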